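/- Let d ≥ 1, τ > 0, Δ ≥ 0. Let A be a real d×d matrix, x, x* ∈ ℝ^d, and let δ : ℝ^d → ℝ be measurable with |δ(x)| ≤ Δ for all x. Let e be uniformly distributed on the unit Euclidean sphere S^{d−1}, and let ξ⁺, ξ⁻ be real random variables, independent of e, with E[ξ⁺] = E[ξ⁻] = 0. Define the gradient estimator g = d·⟨A(x−x*), e⟩·e + (d/(2τ))·((ξ⁺ + δ(x+τe))·‖x+τe−x*‖ − (ξ⁻ + δ(x−τe))·‖x−τe−x*‖)·e. Then E[g] = A(x−x*) + (d/(2τ))·E[(δ(x+τe)‖x+τe−x*‖ − δ(x−τe)‖x−τe−x*‖)·e], and consequently ‖E[g] − A(x−x*)‖ ≤ (dΔ/τ)·(‖x−x*‖ + τ). -/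

import Mathlib

open MeasureTheory ProbabilityTheory

section Moments
set_option linter.unusedSectionVars false

variable {d : ℕ} (μ : Measure (EuclideanSpace ℝ (Fin d))) [IsProbabilityMeasure μ]

lemma cont_coord {d : ℕ} (i : Fin d) : Continuous fun y : EuclideanSpace ℝ (Fin d) => y i :=
  (EuclideanSpace.proj (𝕜 := ℝ) i).continuous

lemma ae_norm_one' (h : μ (Metric.sphere (0 : EuclideanSpace ℝ (Fin d)) 1)ᶜ = 0) :
    ∀ᵐ y ∂μ, ‖y‖ = 1 := by
  have : ∀ᵐ y ∂μ, y ∈ Metric.sphere (0 : EuclideanSpace ℝ (Fin d)) 1 := mem_ae_iff.2 h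
  filter_upwards [this] with y hy
  simpa [Metric.mem_sphere, dist_eq_norm] using hy

lemma coord_abs_le_norm {d : ℕ} (y : EuclideanSpace ℝ (Fin d)) (i : Fin d) : |y i| ≤ ‖y‖ := by
  calc |y i| = Real.sqrt (‖y i‖ ^ 2) := by
        rw [Real.norm_eq_abs, Real.sqrt_sq_eq_abs, abs_abs]
    _ ≤ Real.sqrt (∑ j, ‖y j‖ ^ 2) :=
        Real.sqrt_le_sqrt (Finset.single_le_sum (f := fun j => ‖y j‖ ^ 2)
          (fun j _ => by positivity) (Finset.mem_univ i))
    _ = ‖y‖ := (EuclideanSpace.norm_eq y).symm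

lemma int_coord_mul (h : μ (Metric.sphere (0 : EuclideanSpace ℝ (Fin d)) 1)ᶜ = 0)
    (i j : Fin d) : Integrable (fun y => y i * y j) μ := by
  refine Integrable.mono' (integrable_const 1) (((cont_coord i).mul (cont_coord j)).aestronglyMeasurable) ?_
  filter_upwards [ae_norm_one' μ h] with y hy
  rw [Real.norm_eq_abs, abs_mul]
  have h1 : |y i| ≤ 1 := (coord_abs_le_norm y i).trans_eq hy
  have h2 : |y j| ≤ 1 := (coord_abs_le_norm y j).trans_eq hy
  nlinarith [abs_nonneg (y i), abs_nonneg (y j)]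

lemma integral_eq_integral_map (T : EuclideanSpace ℝ (Fin d) ≃ₗᵢ[ℝ] EuclideanSpace ℝ (Fin d))
    (hT : μ.map T = μ) {f : EuclideanSpace ℝ (Fin d) → ℝ} (hf : Continuous f) :
    ∫ y, f y ∂μ = ∫ y, f (T y) ∂μ := by
  conv_lhs => rw [← hT]
  exact integral_map T.continuous.measurable.aemeasurable hf.aestronglyMeasurable

lemma moment_offdiag
    (hinv : ∀ T : EuclideanSpace ℝ (Fin d) ≃ₗᵢ[ℝ] EuclideanSpace ℝ (Fin d), μ.map T = μ)
    {i j : Fin d} (hij : i ≠ j) : ∫ y, y i * y j ∂μ = 0 := by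
  classical
  set T : EuclideanSpace ℝ (Fin d) ≃ₗᵢ[ℝ] EuclideanSpace ℝ (Fin d) :=
    LinearIsometryEquiv.piLpCongrRight 2
      (fun k => if k = i then LinearIsometryEquiv.neg ℝ else LinearIsometryEquiv.refl ℝ ℝ)
  have hTi : ∀ y : EuclideanSpace ℝ (Fin d), (T y) i = -(y i) := by
    intro y; simp [T]
  have hTj : ∀ y : EuclideanSpace ℝ (Fin d), (T y) j = y j := by
    intro y; simp [T, hij.symm]
  have h1 := integral_eq_integral_map μ T (hinv T) ((cont_coord i).mul (cont_coord j))
  simp only [Pi.mul_apply, hTi, hTj, neg_mul] at h1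
  rw [integral_neg] at h1
  linarith

lemma moment_diag
    (h : μ (Metric.sphere (0 : EuclideanSpace ℝ (Fin d)) 1)ᶜ = 0)
    (hinv : ∀ T : EuclideanSpace ℝ (Fin d) ≃ₗᵢ[ℝ] EuclideanSpace ℝ (Fin d), μ.map T = μ)
    (i : Fin d) : ∫ y, y i * y i ∂μ = (d : ℝ)⁻¹ := by
  classical
  have hall : ∀ j : Fin d, ∫ y, y j * y j ∂μ = ∫ y, y i * y i ∂μ := by
    intro j
    set T : EuclideanSpace ℝ (Fin d) ≃ₗᵢ[ℝ] EuclideanSpace ℝ (Fin d) :=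
      LinearIsometryEquiv.piLpCongrLeft 2 ℝ ℝ (Equiv.swap i j)
    have hTi : ∀ y : EuclideanSpace ℝ (Fin d), (T y) i = y j := by
      intro y
      simp [T, LinearIsometryEquiv.piLpCongrLeft_apply, Equiv.piCongrLeft'_apply,
        Equiv.symm_swap]
    have h1 := integral_eq_integral_map μ T (hinv T) ((cont_coord i).mul (cont_coord i))
    simp only [Pi.mul_apply, hTi] at h1
    exact h1.symm
  have hsum : ∑ j : Fin d, ∫ y, y j * y j ∂μ = 1 := by
    rw [← integral_finset_sum _ (fun j _ => int_coord_mul μ h j j)]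
    have : ∀ᵐ y ∂μ, ∑ j : Fin d, y j * y j = 1 := by
      filter_upwards [ae_norm_one' μ h] with y hy
      have := EuclideanSpace.norm_eq y
      rw [hy] at this
      have h2 : ∑ j, ‖y j‖ ^ 2 = 1 := by
        have h3 : (0:ℝ) ≤ ∑ j, ‖y j‖ ^ 2 := by positivity
        nlinarith [Real.sq_sqrt h3]
      calc ∑ j : Fin d, y j * y j = ∑ j, ‖y j‖ ^ 2 := by
            refine Finset.sum_congr rfl fun j _ => ?_
            rw [Real.norm_eq_abs, sq_abs]; ring
        _ = 1 := h2
    rw [integral_congr_ae this]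
    simp
  rw [Finset.sum_congr rfl (fun j _ => hall j)] at hsum
  simp only [Finset.sum_const, Finset.card_univ, Fintype.card_fin, nsmul_eq_mul] at hsum
  have hd : (d : ℝ) ≠ 0 := by
    have : 0 < d := Nat.pos_of_ne_zero (by rintro rfl; simp at hsum)
    positivity
  field_simp
  simp only [sq]
  linarith [hsum]

lemma integral_inner_smul
    (h : μ (Metric.sphere (0 : EuclideanSpace ℝ (Fin d)) 1)ᶜ = 0)
    (hinv : ∀ T : EuclideanSpace ℝ (Fin d) ≃ₗᵢ[ℝ] EuclideanSpace ℝ (Fin d), μ.map T = μ)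
    (v : EuclideanSpace ℝ (Fin d)) :
    ∫ y, (inner ℝ v y : ℝ) • y ∂μ = (d : ℝ)⁻¹ • v := by
  classical
  have hcont : Continuous fun y : EuclideanSpace ℝ (Fin d) => (inner ℝ v y : ℝ) • y := by
    fun_prop
  have hint : Integrable (fun y => (inner ℝ v y : ℝ) • y) μ := by
    refine Integrable.mono' (integrable_const ‖v‖) hcont.aestronglyMeasurable ?_
    filter_upwards [ae_norm_one' μ h] with y hy
    rw [norm_smul, Real.norm_eq_abs, hy, mul_one]
    exact (abs_real_inner_le_norm v y).trans (by rw [hy, mul_one])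
  refine PiLp.ext fun j => ?_
  have hproj := (EuclideanSpace.proj (𝕜 := ℝ) j).integral_comp_comm hint
  have hlhs : (∫ y, (inner ℝ v y : ℝ) • y ∂μ) j = ∫ y, (inner ℝ v y : ℝ) * y j ∂μ := by
    simpa [smul_eq_mul] using hproj.symm
  rw [hlhs]
  have hexp : ∀ y : EuclideanSpace ℝ (Fin d),
      (inner ℝ v y : ℝ) * y j = ∑ i, v i * (y i * y j) := by
    intro y
    rw [PiLp.inner_apply]
    simp only [RCLike.inner_apply, conj_trivial]
    rw [Finset.sum_mul]
    exact Finset.sum_congr rfl fun i _ => by ring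
  rw [integral_congr_ae (Filter.Eventually.of_forall fun y => hexp y)]
  rw [integral_finset_sum _ (fun i _ => (int_coord_mul μ h i j).const_mul (v i))]
  have : ∀ i, ∫ y, v i * (y i * y j) ∂μ = v i * ∫ y, y i * y j ∂μ := fun i =>
    integral_const_mul _ _
  simp_rw [this]
  have hmom : ∀ i : Fin d, ∫ y, y i * y j ∂μ = if i = j then (d : ℝ)⁻¹ else 0 := by
    intro i
    by_cases hij : i = j
    · subst hij; simp [moment_diag μ h hinv i]
    · simp [hij, moment_offdiag μ hinv hij]
  simp_rw [hmom]
  simp [Finset.sum_ite_eq', PiLp.smul_apply, smul_eq_mul, mul_comm]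

end Moments

/-- the finite-difference gradient estimator
`g = d⟨A(x-x*),e⟩e + (d/(2τ))((ξ⁺+δ(x+τe))‖x+τe-x*‖ - (ξ⁻+δ(x-τe))‖x-τe-x*‖)e`
with `e` uniform on the unit sphere and zero-mean noises `ξ⁺, ξ⁻` independent
of `e` satisfies
`E[g] = A(x-x*) + (d/(2τ))E[(δ(x+τe)‖x+τe-x*‖ - δ(x-τe)‖x-τe-x*‖)e]` and
`‖E[g] - A(x-x*)‖ ≤ (dΔ/τ)(‖x-x*‖ + τ)`. -/
theorem gradient_estimator_bias (d : ℕ) (hd : 1 ≤ d) (τ Δ : ℝ)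
    (hτ : 0 < τ) (hΔ : 0 ≤ Δ)
    (A : Matrix (Fin d) (Fin d) ℝ)
    (x xstar : EuclideanSpace ℝ (Fin d))
    (δ : EuclideanSpace ℝ (Fin d) → ℝ) (hδmeas : Measurable δ)
    (hδbound : ∀ y, |δ y| ≤ Δ)
    (Ω : Type*) [MeasurableSpace Ω] (P : Measure Ω) [IsProbabilityMeasure P]
    (e : Ω → EuclideanSpace ℝ (Fin d)) (he : Measurable e)
    (hesphere : (P.map e) (Metric.sphere (0 : EuclideanSpace ℝ (Fin d)) 1)ᶜ = 0)
    (heinv : ∀ T : EuclideanSpace ℝ (Fin d) ≃ₗᵢ[ℝ] EuclideanSpace ℝ (Fin d),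
      (P.map e).map T = P.map e)
    (ξp ξm : Ω → ℝ) (hξpmeas : Measurable ξp) (hξmmeas : Measurable ξm)
    (hξpint : Integrable ξp P) (hξmint : Integrable ξm P)
    (hξpmean : ∫ ω, ξp ω ∂P = 0) (hξmmean : ∫ ω, ξm ω ∂P = 0)
    (hindp : IndepFun ξp e P) (hindm : IndepFun ξm e P)
    (g : Ω → EuclideanSpace ℝ (Fin d))
    (hg : ∀ ω, g ω =
      (d : ℝ) • (inner ℝ (Matrix.toEuclideanLin A (x - xstar)) (e ω) : ℝ) • e ω
      + ((d : ℝ) / (2 * τ)) •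
        ((ξp ω + δ (x + τ • e ω)) * ‖x + τ • e ω - xstar‖
          - (ξm ω + δ (x - τ • e ω)) * ‖x - τ • e ω - xstar‖) • e ω) :
    (∫ ω, g ω ∂P) = Matrix.toEuclideanLin A (x - xstar)
        + ((d : ℝ) / (2 * τ)) •
          ∫ ω, (δ (x + τ • e ω) * ‖x + τ • e ω - xstar‖
            - δ (x - τ • e ω) * ‖x - τ • e ω - xstar‖) • e ω ∂P
      ∧ ‖(∫ ω, g ω ∂P) - Matrix.toEuclideanLin A (x - xstar)‖
          ≤ (d : ℝ) * Δ / τ * (‖x - xstar‖ + τ) := by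
  classical
  set v : EuclideanSpace ℝ (Fin d) := Matrix.toEuclideanLin A (x - xstar) with hv
  set μ : Measure (EuclideanSpace ℝ (Fin d)) := P.map e with hμ
  haveI : IsProbabilityMeasure μ := Measure.isProbabilityMeasure_map he.aemeasurable
  -- a.e. norm of e is 1
  have hae : ∀ᵐ ω ∂P, ‖e ω‖ = 1 := by
    have h1 : ∀ᵐ y ∂μ, ‖y‖ = 1 := ae_norm_one' μ hesphere
    rw [hμ, ae_map_iff he.aemeasurable] at h1
    · exact h1
    · exact measurableSet_eq_fun (measurable_norm) measurable_const
  set C0 : ℝ := ‖x - xstar‖ + τ with hC0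
  have hC0pos : 0 < C0 := by positivity
  -- norm bounds
  have hnp : ∀ y : EuclideanSpace ℝ (Fin d), ‖y‖ = 1 → ‖x + τ • y - xstar‖ ≤ C0 := by
    intro y hy
    have : x + τ • y - xstar = (x - xstar) + τ • y := by abel
    rw [this]
    calc ‖(x - xstar) + τ • y‖ ≤ ‖x - xstar‖ + ‖τ • y‖ := norm_add_le _ _
      _ = C0 := by rw [norm_smul, hy, Real.norm_eq_abs, abs_of_pos hτ]; ring
  have hnm : ∀ y : EuclideanSpace ℝ (Fin d), ‖y‖ = 1 → ‖x - τ • y - xstar‖ ≤ C0 := by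
    intro y hy
    have : x - τ • y - xstar = (x - xstar) + (-τ) • y := by
      rw [neg_smul]; abel
    rw [this]
    calc ‖(x - xstar) + (-τ) • y‖ ≤ ‖x - xstar‖ + ‖(-τ) • y‖ := norm_add_le _ _
      _ = C0 := by rw [norm_smul, hy, Real.norm_eq_abs, abs_neg, abs_of_pos hτ]; ring
  set c : ℝ := (d : ℝ) / (2 * τ) with hc
  have hcpos : 0 < c := by
    have : (0:ℝ) < d := by exact_mod_cast Nat.lt_of_lt_of_le Nat.zero_lt_one hd
    positivity
  -- scalar auxiliary functions
  set np : Ω → ℝ := fun ω => ‖x + τ • e ω - xstar‖ with hnpdef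
  set nm : Ω → ℝ := fun ω => ‖x - τ • e ω - xstar‖ with hnmdef
  set δp : Ω → ℝ := fun ω => δ (x + τ • e ω) with hδpdef
  set δm : Ω → ℝ := fun ω => δ (x - τ • e ω) with hδmdef
  -- the four pieces
  set h1 : Ω → EuclideanSpace ℝ (Fin d) := fun ω => (d : ℝ) • (inner ℝ v (e ω) : ℝ) • e ω with hh1
  set h2 : Ω → EuclideanSpace ℝ (Fin d) := fun ω => ξp ω • (np ω • e ω) with hh2
  set h3 : Ω → EuclideanSpace ℝ (Fin d) := fun ω => ξm ω • (nm ω • e ω) with hh3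
  set h4 : Ω → EuclideanSpace ℝ (Fin d) := fun ω => (δp ω * np ω - δm ω * nm ω) • e ω with hh4
  -- continuity facts
  have hcontp : Continuous fun y : EuclideanSpace ℝ (Fin d) => ‖x + τ • y - xstar‖ := by
    fun_prop
  have hcontm : Continuous fun y : EuclideanSpace ℝ (Fin d) => ‖x - τ • y - xstar‖ := by
    fun_prop
  have hmp : Measurable fun y : EuclideanSpace ℝ (Fin d) => x + τ • y := by
    fun_prop
  have hmm : Measurable fun y : EuclideanSpace ℝ (Fin d) => x - τ • y := by
    fun_prop
  -- measurability of the pieces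
  have hmeas1 : AEStronglyMeasurable h1 P := by
    have : Continuous fun y : EuclideanSpace ℝ (Fin d) => (d : ℝ) • (inner ℝ v y : ℝ) • y := by
      fun_prop
    exact (this.measurable.comp he).aestronglyMeasurable
  have hmeasG : Measurable fun ω => np ω • e ω := by
    exact ((hcontp.measurable.comp he)).smul he
  have hmeasGm : Measurable fun ω => nm ω • e ω := by
    exact ((hcontm.measurable.comp he)).smul he
  have hmeas2 : AEStronglyMeasurable h2 P := (hξpmeas.smul hmeasG).aestronglyMeasurable
  have hmeas3 : AEStronglyMeasurable h3 P := (hξmmeas.smul hmeasGm).aestronglyMeasurable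
  have hmeas4 : AEStronglyMeasurable h4 P := by
    have hs : Measurable fun ω => δp ω * np ω - δm ω * nm ω :=
      ((hδmeas.comp (hmp.comp he)).mul (hcontp.measurable.comp he)).sub
        ((hδmeas.comp (hmm.comp he)).mul (hcontm.measurable.comp he))
    exact (hs.smul he).aestronglyMeasurable
  -- integrability
  have hint1 : Integrable h1 P := by
    refine Integrable.mono' (integrable_const ((d : ℝ) * ‖v‖)) hmeas1 ?_
    filter_upwards [hae] with ω hω
    rw [hh1]
    simp only
    rw [norm_smul, norm_smul, Real.norm_eq_abs, Real.norm_eq_abs, hω, mul_one,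
      Nat.abs_cast]
    exact mul_le_mul_of_nonneg_left
      ((abs_real_inner_le_norm v (e ω)).trans (by rw [hω, mul_one])) (by positivity)
  have hint2 : Integrable h2 P := by
    refine Integrable.mono' (hξpint.norm.const_mul C0) hmeas2 ?_
    filter_upwards [hae] with ω hω
    rw [hh2]
    simp only
    rw [norm_smul, norm_smul, hω, mul_one, Real.norm_eq_abs, Real.norm_eq_abs, abs_of_nonneg (norm_nonneg _)]
    rw [mul_comm]
    exact mul_le_mul_of_nonneg_right (hnp _ hω) (abs_nonneg _)
  have hint3 : Integrable h3 P := by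
    refine Integrable.mono' (hξmint.norm.const_mul C0) hmeas3 ?_
    filter_upwards [hae] with ω hω
    rw [hh3]
    simp only
    rw [norm_smul, norm_smul, hω, mul_one, Real.norm_eq_abs, Real.norm_eq_abs, abs_of_nonneg (norm_nonneg _)]
    rw [mul_comm]
    exact mul_le_mul_of_nonneg_right (hnm _ hω) (abs_nonneg _)
  have hbound4 : ∀ᵐ ω ∂P, ‖h4 ω‖ ≤ 2 * Δ * C0 := by
    filter_upwards [hae] with ω hω
    rw [hh4]
    simp only
    rw [norm_smul, hω, mul_one, Real.norm_eq_abs]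
    have b1 : |δp ω * np ω| ≤ Δ * C0 := by
      rw [abs_mul]
      exact mul_le_mul (hδbound _) (by rw [abs_of_nonneg (norm_nonneg _)]; exact hnp _ hω)
        (abs_nonneg _) hΔ
    have b2 : |δm ω * nm ω| ≤ Δ * C0 := by
      rw [abs_mul]
      exact mul_le_mul (hδbound _) (by rw [abs_of_nonneg (norm_nonneg _)]; exact hnm _ hω)
        (abs_nonneg _) hΔ
    calc |δp ω * np ω - δm ω * nm ω| ≤ |δp ω * np ω| + |δm ω * nm ω| := abs_sub _ _
      _ ≤ Δ * C0 + Δ * C0 := add_le_add b1 b2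
      _ = 2 * Δ * C0 := by ring
  have hint4 : Integrable h4 P :=
    Integrable.mono' (integrable_const (2 * Δ * C0)) hmeas4 hbound4
  -- decomposition of g
  have hdecomp : ∀ ω, g ω = h1 ω + (c • h2 ω - c • h3 ω + c • h4 ω) := by
    intro ω
    rw [hg ω]
    congr 1
    rw [hh2, hh3, hh4]
    simp only [smul_smul, ← hc]
    rw [← sub_smul, ← add_smul]
    congr 1
    ring
  -- integral of h1
  have hI1 : ∫ ω, h1 ω ∂P = v := by
    rw [hh1]
    simp only
    rw [integral_smul]
    have hcont : Continuous fun y : EuclideanSpace ℝ (Fin d) => (inner ℝ v y : ℝ) • y := by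
      fun_prop
    have : ∫ ω, (inner ℝ v (e ω) : ℝ) • e ω ∂P = ∫ y, (inner ℝ v y : ℝ) • y ∂μ :=
      (integral_map he.aemeasurable hcont.aestronglyMeasurable).symm
    rw [this, integral_inner_smul μ hesphere heinv v, smul_smul,
      mul_inv_cancel₀, one_smul]
    exact Nat.cast_ne_zero.mpr (by omega)
  -- integral of h2 and h3 vanish
  have hzero : ∀ (ξ : Ω → ℝ) (hξmeas : Measurable ξ) (hξint : Integrable ξ P)
      (hξmean : ∫ ω, ξ ω ∂P = 0) (hind : IndepFun ξ e P)
      (n : Ω → ℝ) (F : EuclideanSpace ℝ (Fin d) → ℝ) (hF : Continuous F)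
      (hn : ∀ ω, n ω = F (e ω)) (hC : ∀ᵐ ω ∂P, |n ω| ≤ C0)
      (hintg : Integrable (fun ω => ξ ω • (n ω • e ω)) P),
      ∫ ω, ξ ω • (n ω • e ω) ∂P = 0 := by
    intro ξ hξmeas hξint hξmean hind n F hF hn hC hintg
    refine PiLp.ext fun j => ?_
    have hproj := (EuclideanSpace.proj (𝕜 := ℝ) j).integral_comp_comm hintg
    have hlhs : (∫ ω, ξ ω • (n ω • e ω) ∂P) j = ∫ ω, ξ ω * (n ω * e ω j) ∂P := by
      simpa [smul_eq_mul] using hproj.symm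
    have hφcont : Continuous fun y : EuclideanSpace ℝ (Fin d) => F y * y j :=
      hF.mul (cont_coord j)
    have hindφ : IndepFun ξ (fun ω => n ω * e ω j) P := by
      have := hind.comp measurable_id hφcont.measurable
      have heq : (fun y : EuclideanSpace ℝ (Fin d) => F y * y j) ∘ e
          = fun ω => n ω * e ω j := by
        funext ω; simp [Function.comp, hn ω]
      rw [← heq]
      exact this
    have hφint : Integrable (fun ω => n ω * e ω j) P := by
      refine Integrable.mono' (integrable_const C0) ?_ ?_
      · exact ((hφcont.measurable.comp he).aestronglyMeasurable).congr
          (Filter.Eventually.of_forall fun ω => by simp [Function.comp, hn ω])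
      · filter_upwards [hae, hC] with ω hω hCω
        rw [Real.norm_eq_abs, abs_mul]
        have : |e ω j| ≤ 1 := (coord_abs_le_norm (e ω) j).trans_eq hω
        calc |n ω| * |e ω j| ≤ C0 * 1 := mul_le_mul hCω this (abs_nonneg _) hC0pos.le
          _ = C0 := mul_one _
    have := hindφ.integral_fun_mul_eq_mul_integral hξint.aestronglyMeasurable hφint.aestronglyMeasurable
    have hmul : ∫ ω, ξ ω * (n ω * e ω j) ∂P = (∫ ω, ξ ω ∂P) * ∫ ω, n ω * e ω j ∂P := this
    rw [hlhs, hmul, hξmean, zero_mul]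
    simp
  have hI2 : ∫ ω, h2 ω ∂P = 0 := by
    refine hzero ξp hξpmeas hξpint hξpmean hindp np _ hcontp (fun ω => rfl) ?_ hint2
    filter_upwards [hae] with ω hω
    rw [abs_of_nonneg (norm_nonneg _)]
    exact hnp _ hω
  have hI3 : ∫ ω, h3 ω ∂P = 0 := by
    refine hzero ξm hξmmeas hξmint hξmmean hindm nm _ hcontm (fun ω => rfl) ?_ hint3
    filter_upwards [hae] with ω hω
    rw [abs_of_nonneg (norm_nonneg _)]
    exact hnm _ hω
  -- putting it together
  have hIg : ∫ ω, g ω ∂P = v + c • ∫ ω, h4 ω ∂P := by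
    have hint2' : Integrable (fun ω => c • h2 ω) P := hint2.smul c
    have hint3' : Integrable (fun ω => c • h3 ω) P := hint3.smul c
    have hint4' : Integrable (fun ω => c • h4 ω) P := hint4.smul c
    have hint23 : Integrable (fun ω => c • h2 ω - c • h3 ω) P := hint2'.sub hint3'
    have hint234 : Integrable (fun ω => c • h2 ω - c • h3 ω + c • h4 ω) P := hint23.add hint4'
    rw [integral_congr_ae (Filter.Eventually.of_forall hdecomp)]
    rw [integral_add hint1 hint234, integral_add hint23 hint4', integral_sub hint2' hint3', hI1,
      integral_smul, integral_smul, integral_smul, hI2, hI3]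
    simp
  have hfirst : (∫ ω, g ω ∂P) = v + c • ∫ ω, h4 ω ∂P := hIg
  constructor
  · exact hfirst
  · rw [hfirst]
    have : v + c • (∫ ω, h4 ω ∂P) - v = c • ∫ ω, h4 ω ∂P := by abel
    rw [this, norm_smul, Real.norm_eq_abs, abs_of_pos hcpos]
    have hnormint : ‖∫ ω, h4 ω ∂P‖ ≤ 2 * Δ * C0 := by
      calc ‖∫ ω, h4 ω ∂P‖ ≤ ∫ ω, ‖h4 ω‖ ∂P := norm_integral_le_integral_norm _
        _ ≤ ∫ _ω, (2 * Δ * C0) ∂P := integral_mono_ae hint4.norm (integrable_const _) hbound4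
        _ = 2 * Δ * C0 := by simp
    calc c * ‖∫ ω, h4 ω ∂P‖ ≤ c * (2 * Δ * C0) :=
          mul_le_mul_of_nonneg_left hnormint hcpos.le
      _ = (d : ℝ) * Δ / τ * (‖x - xstar‖ + τ) := by
          rw [hc, hC0]; field_simp
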